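/- The semiring S = M₂(ℝ⁺) is not left Noetherian: the left ideals N_{≥ 1/m} = { [[a,p],[b,q]] : p ≥ a/m, q ≥ b/m } form a strictly ascending non-terminating chain N_{≥1} ⊊ N_{≥1/2} ⊊ N_{≥1/3} ⊊ ⋯, and not left Artinian: the left ideals N_{≥ m} form a strictly descending non-terminating chain. -/
import Mathlib


/-- The 2×2 matrix semiring over the nonnegative reals. -/
abbrev M2 : Type := Matrix (Fin 2) (Fin 2) NNReal

/-- A subset of the semiring is a left ideal. -/
def IsLeftIdeal (I : Set M2) : Prop :=
  0 ∈ I ∧ (∀ x ∈ I, ∀ y ∈ I, x + y ∈ I) ∧ ∀ s : M2, ∀ x ∈ I, s * x ∈ I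

/-- `N_{≥r} = { [[a,p],[b,q]] : p ≥ ra, q ≥ rb }`. -/
def Nge (r : NNReal) : Set M2 := {A | r * A 0 0 ≤ A 0 1 ∧ r * A 1 0 ≤ A 1 1}

lemma Nge_isLeftIdeal (r : NNReal) : IsLeftIdeal (Nge r) := by
  refine ⟨⟨by simp, by simp⟩, ?_, ?_⟩
  · rintro x ⟨hx1, hx2⟩ y ⟨hy1, hy2⟩
    constructor <;> simp only [Matrix.add_apply, mul_add] <;> exact add_le_add ‹_› ‹_›
  · rintro s x ⟨hx1, hx2⟩
    constructor <;>
    · simp only [Matrix.mul_apply, Fin.sum_univ_two, mul_add]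
      apply add_le_add <;> rw [mul_left_comm] <;> gcongr

lemma Nge_mono {r r' : NNReal} (h : r' ≤ r) : Nge r ⊆ Nge r' := by
  rintro A ⟨h1, h2⟩
  exact ⟨le_trans (by gcongr) h1, le_trans (by gcongr) h2⟩

lemma Nge_ssubset {r r' : NNReal} (h : r' < r) : Nge r ⊂ Nge r' := by
  refine ⟨Nge_mono h.le, fun hsub => ?_⟩
  have hmem : (Matrix.of ![![1, r'], ![0, 0]] : M2) ∈ Nge r' := by
    constructor <;> simp [Nge]
  have := hsub hmem
  obtain ⟨h1, _⟩ := this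
  simp only [Matrix.of_apply] at h1
  norm_num at h1
  exact absurd h1 (not_le.mpr h)

/-- `S = M₂(ℝ⁺)` is not left Noetherian: the left ideals `N_{≥1/m}` form a
strictly ascending non-terminating chain `N_{≥1} ⊊ N_{≥1/2} ⊊ ⋯`; and not left Artinian:
the left ideals `N_{≥m}` form a strictly descending non-terminating chain. -/
theorem stmt_12 :
    (∀ r : NNReal, IsLeftIdeal (Nge r)) ∧
    (∀ m : ℕ, Nge (1 / ((m : NNReal) + 1)) ⊂ Nge (1 / ((m : NNReal) + 2))) ∧
    (∀ m : ℕ, Nge ((m : NNReal) + 2) ⊂ Nge ((m : NNReal) + 1)) := by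
  refine ⟨Nge_isLeftIdeal, fun m => Nge_ssubset ?_, fun m => Nge_ssubset ?_⟩
  · apply div_lt_div_of_pos_left <;> [norm_num; positivity; simp]
  · simp
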